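/- Let f : ℂ → ℂ be entire and suppose for some c > 0 and every N ∈ ℕ, sup_{|Im z| ≤ N} |f(z)|·e^{c|z|} < ∞. Then the Fourier transform f̂(ξ) = ∫_ℝ f(t)e^{−itξ} dt extends holomorphically to the strip {|Im ξ| < c} and, for every n ∈ ℕ, satisfies |f̂(x)| ≤ C_n·e^{−n|x|} for all real x and some constant C_n. -/

import Mathlib

open MeasureTheory Set Filter intervalIntegral Complex

open scoped Topology

lemma stmt18_integrable_exp_abs {c : ℝ} (hc : 0 < c) :
    Integrable (fun t : ℝ => Real.exp (-(c * |t|))) := by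
  have h1 : IntegrableOn (fun t : ℝ => Real.exp (-(c * |t|))) (Ioi 0) := by
    refine (exp_neg_integrableOn_Ioi 0 hc).congr_fun (fun t ht => ?_) measurableSet_Ioi
    rw [abs_of_pos ht]; beta_reduce; rw [neg_mul]
  have h2 : IntegrableOn (fun t : ℝ => Real.exp (-(c * |t|))) (Iic 0) := by
    rw [← Measure.map_neg_eq_self (volume : Measure ℝ)]
    have m : MeasurableEmbedding fun x : ℝ => -x := (Homeomorph.neg ℝ).measurableEmbedding
    rw [m.integrableOn_map_iff]
    simp_rw [Function.comp_def, abs_neg, neg_preimage, neg_Iic, neg_zero]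
    exact Iff.mpr integrableOn_Ici_iff_integrableOn_Ioi h1
  have h := h2.union h1
  rwa [Iic_union_Ioi, integrableOn_univ] at h

lemma stmt18_shift {g : ℂ → ℂ} (hg : Differentiable ℂ g) {K c : ℝ} (hc : 0 < c) (y : ℝ)
    (hK : ∀ z : ℂ, |z.im| ≤ |y| → ‖g z‖ ≤ K * Real.exp (-(c * ‖z‖))) :
    ∫ t : ℝ, g (t + y * Complex.I) = ∫ t : ℝ, g t := by
  have hK0 : 0 ≤ K := by
    have h := hK 0 (by simp)
    simp only [norm_zero, mul_zero, neg_zero, Real.exp_zero, mul_one] at h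
    exact (norm_nonneg _).trans h
  have hcont : Continuous g := hg.continuous
  -- integrability along horizontal lines
  have hint : ∀ s : ℝ, |s| ≤ |y| → Integrable (fun t : ℝ => g (t + s * Complex.I)) := by
    intro s hs
    refine Integrable.mono' ((stmt18_integrable_exp_abs hc).const_mul K)
      (hcont.comp (by continuity)).aestronglyMeasurable (ae_of_all _ fun t => ?_)
    have him : |((t : ℂ) + s * Complex.I).im| ≤ |y| := by simpa using hs
    refine (hK _ him).trans ?_
    have habs : |t| ≤ ‖(t : ℂ) + s * Complex.I‖ := by
      simpa using Complex.abs_re_le_norm ((t : ℂ) + s * Complex.I)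
    gcongr
  have hg0 : Integrable (fun t : ℝ => g t) := by
    simpa using hint 0 (by simp)
  have hgy : Integrable (fun t : ℝ => g (t + y * Complex.I)) := hint y le_rfl
  -- rectangle identity
  have rect : ∀ T : ℝ,
      (∫ x in -T..T, g x) - (∫ x in -T..T, g (x + y * Complex.I)) +
        Complex.I • (∫ s in (0:ℝ)..y, g (T + s * Complex.I)) -
        Complex.I • (∫ s in (0:ℝ)..y, g (-T + s * Complex.I)) = 0 := by
    intro T
    have h := Complex.integral_boundary_rect_eq_zero_of_differentiableOn g (-T)
      (T + y * Complex.I) hg.differentiableOn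
    simpa only [neg_im, ofReal_im, neg_zero, ofReal_zero, zero_mul, add_zero, neg_re,
      ofReal_re, add_re, mul_re, I_re, mul_zero, I_im, tsub_zero, add_im, mul_im,
      mul_one, zero_add, smul_eq_mul, ofReal_neg] using h
  -- vertical integrals tend to 0
  have vert : ∀ (T : ℝ), 0 ≤ T → ∀ (r : ℝ), |r| = T →
      ‖∫ s in (0:ℝ)..y, g (r + s * Complex.I)‖ ≤ K * Real.exp (-(c * T)) * |y| := by
    intro T hT r hr
    have := intervalIntegral.norm_integral_le_of_norm_le_const
      (C := K * Real.exp (-(c * T))) (f := fun s : ℝ => g (r + s * Complex.I))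
      (a := (0:ℝ)) (b := y) ?_
    · simpa using this
    · intro s hs
      have hsy : |s| ≤ |y| := by
        rcases le_or_gt 0 y with h | h
        · rw [uIoc_of_le h] at hs
          rw [_root_.abs_of_pos hs.1, _root_.abs_of_nonneg h]; exact hs.2
        · rw [uIoc_of_ge h.le] at hs
          rw [_root_.abs_of_nonpos hs.2, _root_.abs_of_neg h]; exact neg_le_neg hs.1.le
      have him : |((r : ℂ) + s * Complex.I).im| ≤ |y| := by simpa using hsy
      have habs : T ≤ ‖(r : ℂ) + s * Complex.I‖ := by
        rw [← hr]
        simpa using Complex.abs_re_le_norm ((r : ℂ) + s * Complex.I)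
      calc ‖g ((r : ℂ) + s * Complex.I)‖ ≤ K * Real.exp (-(c * ‖(r:ℂ) + s * Complex.I‖)) :=
            hK _ him
        _ ≤ K * Real.exp (-(c * T)) := by gcongr
  have vtend : Tendsto (fun T : ℝ =>
      Complex.I • (∫ s in (0:ℝ)..y, g (T + s * Complex.I)) -
      Complex.I • (∫ s in (0:ℝ)..y, g (-T + s * Complex.I))) atTop (𝓝 0) := by
    have hb : Tendsto (fun T : ℝ => 2 * (K * Real.exp (-(c * T)) * |y|)) atTop (𝓝 0) := by
      have : Tendsto (fun T : ℝ => Real.exp (-(c * T))) atTop (𝓝 0) := by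
        simpa [neg_mul] using Real.tendsto_exp_comp_nhds_zero.mpr
          (tendsto_id.const_mul_atTop_of_neg (neg_neg_iff_pos.mpr hc))
      have h2 := ((this.const_mul K).mul_const |y|).const_mul 2
      simpa using h2
    refine squeeze_zero_norm' ?_ hb
    filter_upwards [eventually_ge_atTop (0:ℝ)] with T hT
    have h1 := vert T hT T (_root_.abs_of_nonneg hT)
    have h2 := vert T hT (-T) (by rw [abs_neg, _root_.abs_of_nonneg hT])
    calc ‖Complex.I • (∫ s in (0:ℝ)..y, g (T + s * Complex.I)) -
          Complex.I • (∫ s in (0:ℝ)..y, g (-T + s * Complex.I))‖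
        ≤ ‖Complex.I • (∫ s in (0:ℝ)..y, g (T + s * Complex.I))‖ +
          ‖Complex.I • (∫ s in (0:ℝ)..y, g (-T + s * Complex.I))‖ := norm_sub_le _ _
      _ ≤ K * Real.exp (-(c * T)) * |y| + K * Real.exp (-(c * T)) * |y| := by
          rw [norm_smul, norm_smul]
          simp only [Complex.norm_I, one_mul]
          exact add_le_add h1 (by simpa using h2)
      _ = 2 * (K * Real.exp (-(c * T)) * |y|) := by ring
  have t1 : Tendsto (fun T : ℝ => ∫ x in -T..T, g x) atTop (𝓝 (∫ t : ℝ, g t)) :=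
    intervalIntegral_tendsto_integral hg0 tendsto_neg_atTop_atBot tendsto_id
  have t2 : Tendsto (fun T : ℝ => ∫ x in -T..T, g (x + y * Complex.I)) atTop
      (𝓝 (∫ t : ℝ, g (t + y * Complex.I))) :=
    intervalIntegral_tendsto_integral hgy tendsto_neg_atTop_atBot tendsto_id
  have t2' : Tendsto (fun T : ℝ => ∫ x in -T..T, g (x + y * Complex.I)) atTop
      (𝓝 ((∫ t : ℝ, g t) + 0)) := by
    have : (fun T : ℝ => ∫ x in -T..T, g (x + y * Complex.I)) =
        fun T : ℝ => (∫ x in -T..T, g x) +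
          (Complex.I • (∫ s in (0:ℝ)..y, g (T + s * Complex.I)) -
           Complex.I • (∫ s in (0:ℝ)..y, g (-T + s * Complex.I))) := by
      ext T
      have h := rect T
      have h' : (∫ x in -T..T, g (x + y * Complex.I)) =
          (∫ x in -T..T, g x) +
          (Complex.I • (∫ s in (0:ℝ)..y, g (T + s * Complex.I)) -
           Complex.I • (∫ s in (0:ℝ)..y, g (-T + s * Complex.I))) := by
        linear_combination -h
      exact h'
    rw [this]
    exact t1.add vtend
  rw [add_zero] at t2'
  exact tendsto_nhds_unique t2 t2'

/-- Let f be entire and suppose that for some c > 0 and every N ∈ ℕ,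
sup_{|Im z| ≤ N} |f(z)|·e^{c|z|} < ∞. Then the Fourier transform
f̂(ξ) = ∫ f(t)e^{−itξ} dt extends holomorphically to the strip {|Im ξ| < c} and decays
superexponentially on ℝ: for every n ∈ ℕ, |f̂(x)| ≤ C_n·e^{−n|x|}. -/
theorem stmt18 (f : ℂ → ℂ) (hf : Differentiable ℂ f) (c : ℝ) (hc : 0 < c)
    (hbound : ∀ N : ℕ, ∃ M : ℝ, ∀ z : ℂ, |z.im| ≤ N →
      ‖f z‖ * Real.exp (c * ‖z‖) ≤ M) :
    ∃ F : ℂ → ℂ, DifferentiableOn ℂ F {ξ : ℂ | |ξ.im| < c} ∧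
      (∀ x : ℝ, F x = ∫ t : ℝ, f t * Complex.exp (-Complex.I * t * x)) ∧
      ∀ n : ℕ, ∃ C : ℝ, ∀ x : ℝ,
        ‖∫ t : ℝ, f t * Complex.exp (-Complex.I * t * x)‖
          ≤ C * Real.exp (-n * |x|) := by
  -- rewrite the bound in a convenient form
  have hb : ∀ N : ℕ, ∃ M : ℝ, 0 ≤ M ∧ ∀ z : ℂ, |z.im| ≤ N →
      ‖f z‖ ≤ M * Real.exp (-(c * ‖z‖)) := by
    intro N
    obtain ⟨M, hM⟩ := hbound N
    have hM0 : 0 ≤ M := le_trans (by positivity) (hM 0 (by simp))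
    refine ⟨M, hM0, fun z hz => ?_⟩
    have h := hM z hz
    rw [Real.exp_neg, ← div_eq_mul_inv, le_div_iff₀ (Real.exp_pos _)]
    exact h
  obtain ⟨M₀, hM₀0, hM₀⟩ := hb 0
  have hfr : ∀ t : ℝ, ‖f t‖ ≤ M₀ * Real.exp (-(c * |t|)) := by
    intro t
    have := hM₀ t (by simp)
    simpa using this
  -- norm of the integrand
  have hnorm : ∀ (t : ℝ) (ξ : ℂ),
      ‖f t * Complex.exp (-Complex.I * t * ξ)‖ = ‖f t‖ * Real.exp (t * ξ.im) := by
    intro t ξ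
    rw [norm_mul, Complex.norm_exp]
    congr 2
    simp [Complex.mul_re]
  have hcont : ∀ ξ : ℂ, Continuous fun t : ℝ => f t * Complex.exp (-Complex.I * t * ξ) := by
    intro ξ
    exact (hf.continuous.comp Complex.continuous_ofReal).mul (Complex.continuous_exp.comp
      (by continuity))
  set F : ℂ → ℂ := fun ξ => ∫ t : ℝ, f t * Complex.exp (-Complex.I * t * ξ) with hF
  refine ⟨F, ?_, fun x => rfl, ?_⟩
  · -- holomorphy on the strip
    intro ξ₀ hξ₀
    simp only [mem_setOf_eq] at hξ₀
    set b := |ξ₀.im| with hbdef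
    set ε := (c - b) / 2 with hε
    have hb0 : 0 ≤ b := abs_nonneg _
    have hεpos : 0 < ε := by simp only [hε]; linarith
    have key := _root_.hasDerivAt_integral_of_dominated_loc_of_deriv_le (μ := volume)
      (F := fun ξ (t : ℝ) => f t * Complex.exp (-Complex.I * t * ξ))
      (F' := fun ξ (t : ℝ) => f t * (-Complex.I * t * Complex.exp (-Complex.I * t * ξ)))
      (x₀ := ξ₀)
      (bound := fun t : ℝ => (M₀ * (2 / ε)) * Real.exp (-(ε / 2 * |t|)))
      (Metric.ball_mem_nhds ξ₀ hεpos)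
      (Eventually.of_forall fun ξ => (hcont ξ).aestronglyMeasurable)
      ?_ ?_ ?_ ?_ ?_
    · exact key.2.differentiableAt.differentiableWithinAt
    · -- integrability at ξ₀
      refine Integrable.mono' ((stmt18_integrable_exp_abs (show (0:ℝ) < c - b by linarith)).const_mul M₀)
        (hcont ξ₀).aestronglyMeasurable (ae_of_all _ fun t => ?_)
      rw [hnorm]
      have hexp1 : Real.exp (t * ξ₀.im) ≤ Real.exp (b * |t|) := by
        apply Real.exp_le_exp.mpr
        calc t * ξ₀.im ≤ |t * ξ₀.im| := le_abs_self _
          _ = b * |t| := by rw [abs_mul]; ring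
      calc ‖f t‖ * Real.exp (t * ξ₀.im)
          ≤ (M₀ * Real.exp (-(c * |t|))) * Real.exp (b * |t|) :=
            mul_le_mul (hfr t) hexp1 (Real.exp_pos _).le (by positivity)
        _ = M₀ * Real.exp (-((c - b) * |t|)) := by
            rw [mul_assoc, ← Real.exp_add]; ring_nf
    · -- measurability of F' ξ₀
      exact ((hf.continuous.comp Complex.continuous_ofReal).mul (by continuity)).aestronglyMeasurable
    · -- the uniform local bound on the derivative
      refine ae_of_all _ fun t ξ hξ => ?_
      have him : |ξ.im| ≤ b + ε := by
        have h1 : |ξ.im - ξ₀.im| ≤ ‖ξ - ξ₀‖ := by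
          simpa using Complex.abs_im_le_norm (ξ - ξ₀)
        have h2 : ‖ξ - ξ₀‖ < ε := by simpa [Metric.mem_ball, dist_eq_norm] using hξ
        calc |ξ.im| ≤ |ξ₀.im| + |ξ.im - ξ₀.im| := by
              have := abs_sub_abs_le_abs_sub ξ.im ξ₀.im
              linarith [abs_sub_comm ξ.im ξ₀.im ▸ this]
          _ ≤ b + ε := by exact add_le_add le_rfl (le_of_lt (lt_of_le_of_lt h1 h2))
      have hteps : |t| ≤ (2 / ε) * Real.exp (ε / 2 * |t|) := by
        have h1 : ε / 2 * |t| ≤ Real.exp (ε / 2 * |t|) :=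
          (Real.add_one_le_exp _).trans' (by linarith [abs_nonneg t])
        calc |t| = (2 / ε) * (ε / 2 * |t|) := by field_simp
          _ ≤ (2 / ε) * Real.exp (ε / 2 * |t|) := by gcongr
      have hexp : ‖(-Complex.I * (t : ℂ) * Complex.exp (-Complex.I * t * ξ))‖
          = |t| * Real.exp (t * ξ.im) := by
        rw [norm_mul, norm_mul, Complex.norm_exp]
        simp only [norm_neg, Complex.norm_I, one_mul, Complex.norm_real, Real.norm_eq_abs]
        congr 2
        simp [Complex.mul_re]
      rw [norm_mul, hexp]
      have hexp2 : Real.exp (t * ξ.im) ≤ Real.exp ((b + ε) * |t|) := by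
        apply Real.exp_le_exp.mpr
        calc t * ξ.im ≤ |t * ξ.im| := le_abs_self _
          _ = |ξ.im| * |t| := by rw [abs_mul]; ring
          _ ≤ (b + ε) * |t| := by gcongr
      calc ‖f t‖ * (|t| * Real.exp (t * ξ.im))
          ≤ (M₀ * Real.exp (-(c * |t|))) *
              (((2 / ε) * Real.exp (ε / 2 * |t|)) * Real.exp ((b + ε) * |t|)) :=
            mul_le_mul (hfr t)
              (mul_le_mul hteps hexp2 (Real.exp_pos _).le (by positivity))
              (by positivity) (by positivity)
        _ = (M₀ * (2 / ε)) * Real.exp (-(c * |t|) + ε / 2 * |t| + (b + ε) * |t|) := by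
            rw [Real.exp_add, Real.exp_add]; ring
        _ = (M₀ * (2 / ε)) * Real.exp (-(ε / 2 * |t|)) := by
            congr 1
            congr 1
            have : c = b + 2 * ε := by simp only [hε]; ring
            rw [this]; ring
    · exact (stmt18_integrable_exp_abs (by positivity : (0:ℝ) < ε / 2)).const_mul _
    · -- differentiability in ξ of the integrand
      refine ae_of_all _ fun t ξ hξ => ?_
      have h1 : HasDerivAt (fun ξ : ℂ => -Complex.I * t * ξ) (-Complex.I * t) ξ := by
        simpa using (hasDerivAt_id ξ).const_mul (-Complex.I * (t : ℂ))
      have h2 := (h1.cexp).const_mul (f t)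
      convert h2 using 1
      · rfl
      · ring
  · -- superexponential decay
    intro n
    obtain ⟨M, hM0, hM⟩ := hb n
    refine ⟨M * ∫ t : ℝ, Real.exp (-(c * |t|)), fun x => ?_⟩
    set y : ℝ := if 0 ≤ x then -(n : ℝ) else (n : ℝ) with hy
    have hyabs : |y| = (n : ℝ) := by
      simp only [hy]
      split <;> simp
    have hxy : x * y = -((n : ℝ) * |x|) := by
      by_cases h : 0 ≤ x
      · simp only [hy, if_pos h, _root_.abs_of_nonneg h]; ring
      · simp only [hy, if_neg h, _root_.abs_of_neg (lt_of_not_ge h)]; ring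
    set g : ℂ → ℂ := fun z => f z * Complex.exp (-Complex.I * z * x) with hg
    have hgdiff : Differentiable ℂ g :=
      hf.mul ((differentiable_id.const_mul (-Complex.I)).mul_const ((x : ℝ) : ℂ)).cexp
    have hshift := stmt18_shift hgdiff hc y (K := M * Real.exp (|x| * n)) ?_
    · -- use the shifted integral
      have heq : (∫ t : ℝ, f t * Complex.exp (-Complex.I * t * x)) = ∫ t : ℝ, g (t + y * Complex.I) :=
        hshift.symm
      rw [heq]
      have hb2 : ∀ t : ℝ, ‖g (t + y * Complex.I)‖ ≤
          (M * Real.exp (x * y)) * Real.exp (-(c * |t|)) := by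
        intro t
        have himz : |((t : ℂ) + y * Complex.I).im| ≤ (n : ℝ) := by
          simpa using hyabs.le
        have hfz := hM _ himz
        have habs : |t| ≤ ‖(t : ℂ) + y * Complex.I‖ := by
          simpa using Complex.abs_re_le_norm ((t : ℂ) + y * Complex.I)
        have hre : ‖Complex.exp (-Complex.I * ((t : ℂ) + y * Complex.I) * x)‖ = Real.exp (x * y) := by
          rw [Complex.norm_exp]
          congr 1
          simp [Complex.mul_re, Complex.mul_im]
          ring
        calc ‖g ((t : ℂ) + y * Complex.I)‖
            = ‖f ((t : ℂ) + y * Complex.I)‖ * Real.exp (x * y) := by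
              rw [hg]; simp only [norm_mul]
              rw [hre]
          _ ≤ (M * Real.exp (-(c * ‖(t : ℂ) + y * Complex.I‖))) * Real.exp (x * y) :=
              mul_le_mul_of_nonneg_right hfz (Real.exp_pos _).le
          _ ≤ (M * Real.exp (-(c * |t|))) * Real.exp (x * y) := by gcongr
          _ = (M * Real.exp (x * y)) * Real.exp (-(c * |t|)) := by ring
      calc ‖∫ t : ℝ, g (t + y * Complex.I)‖
          ≤ ∫ t : ℝ, (M * Real.exp (x * y)) * Real.exp (-(c * |t|)) :=
            norm_integral_le_of_norm_le ((stmt18_integrable_exp_abs hc).const_mul _)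
              (ae_of_all _ hb2)
        _ = (M * Real.exp (x * y)) * ∫ t : ℝ, Real.exp (-(c * |t|)) := integral_const_mul _ _
        _ = (M * ∫ t : ℝ, Real.exp (-(c * |t|))) * Real.exp (-(n : ℝ) * |x|) := by
            rw [hxy]; ring_nf
    · -- bound hypothesis for the shift
      intro z hz
      rw [hyabs] at hz
      have hfz := hM z hz
      have hre : ‖Complex.exp (-Complex.I * z * x)‖ = Real.exp (x * z.im) := by
        rw [Complex.norm_exp]
        congr 1
        simp [Complex.mul_re, Complex.mul_im]
        ring
      have h1 : x * z.im ≤ |x| * (n : ℝ) := by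
        calc x * z.im ≤ |x * z.im| := le_abs_self _
          _ = |x| * |z.im| := abs_mul _ _
          _ ≤ |x| * (n : ℝ) := by gcongr
      calc ‖g z‖ = ‖f z‖ * Real.exp (x * z.im) := by
            rw [hg]; simp only [norm_mul]
            rw [hre]
        _ ≤ (M * Real.exp (-(c * ‖z‖))) * Real.exp (|x| * (n : ℝ)) :=
            mul_le_mul hfz (Real.exp_le_exp.mpr h1) (Real.exp_pos _).le (by positivity)
        _ = (M * Real.exp (|x| * n)) * Real.exp (-(c * ‖z‖)) := by ring
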